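/- Let R be a ring and x ∈ R not a left zero-divisor. Then for any f, y ∈ R: x⁻¹(xfR + (1+xy)R) = fR + (1+yx)R. -/
import Mathlib


/-- Let `x ∈ R` be no left zero-divisor.  Then for any `f, y ∈ R`,
`x⁻¹(xfR + (1+xy)R) = fR + (1+yx)R`. -/
theorem stmt7 (R : Type*) [Ring R] (x : R) (hx : ∀ r : R, x * r = 0 → r = 0)
    (f y : R) :
    ∀ r : R,
      x * r ∈ Submodule.span Rᵐᵒᵖ ({x * f} : Set R) ⊔
              Submodule.span Rᵐᵒᵖ ({1 + x * y} : Set R) ↔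
      r ∈ Submodule.span Rᵐᵒᵖ ({f} : Set R) ⊔
          Submodule.span Rᵐᵒᵖ ({1 + y * x} : Set R) := by
  intro r
  simp only [Submodule.mem_sup, Submodule.mem_span_singleton,
    MulOpposite.smul_eq_mul_unop]
  constructor
  · rintro ⟨_, ⟨s, rfl⟩, _, ⟨t, rfl⟩, h⟩
    set u : R := r - f * s.unop - y * t.unop with hu
    have ht : t.unop = x * u := by
      have h0 : x * (r - f * s.unop - y * t.unop - (r - f * s.unop - y * t.unop)) = 0 := by
        rw [sub_self, mul_zero]
      have h1 : x * r - (x * f * s.unop + (1 + x * y) * t.unop) = 0 := by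
        rw [h, sub_self]
      have h2 : x * r = x * f * s.unop + t.unop + x * (y * t.unop) := by
        have := sub_eq_zero.mp h1
        rw [this]; noncomm_ring
      have : t.unop - x * u = 0 := by
        rw [hu]
        have : x * (r - f * s.unop - y * t.unop)
            = x * r - x * (f * s.unop) - x * (y * t.unop) := by noncomm_ring
        rw [this, h2]; noncomm_ring
      exact sub_eq_zero.mp this
    refine ⟨f * s.unop, ⟨s, rfl⟩, (1 + y * x) * u, ⟨MulOpposite.op u, rfl⟩, ?_⟩
    rw [hu] at ht ⊢
    have : (1 + y * x) * (r - f * s.unop - y * t.unop)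
        = r - f * s.unop - y * t.unop + y * (x * (r - f * s.unop - y * t.unop)) := by
      noncomm_ring
    rw [this, ← ht]; noncomm_ring
  · rintro ⟨_, ⟨s, rfl⟩, _, ⟨u, rfl⟩, h⟩
    refine ⟨(x * f) * s.unop, ⟨s, rfl⟩,
      (1 + x * y) * (x * u.unop), ⟨MulOpposite.op (x * u.unop), rfl⟩, ?_⟩
    rw [← h]; noncomm_ring
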